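/- If K_+ and K_− differ by a crossing change at a single crossing c₁, then W(L_{c₁}) computed in K_+ equals −W(L_{ĉ₁}) computed in K_−. -/

import Mathlib

open scoped Classical
open LaurentPolynomial

noncomputable section

/-- A Gauss diagram for an oriented virtual knot with `n` classical crossings: a circle
with `2 * n` marked points (positions in `ZMod (2*n)`, traversed in cyclic order), and for
each crossing `c` a signed oriented chord, recorded by the position `over c` of its
over-passage (head), the position `under c` of its under-passage (tail), and its sign. -/
structure GaussDiagram (n : ℕ) where
  over' : Fin n → ZMod (2 * n)
  under : Fin n → ZMod (2 * n)
  sign : Fin n → ℤ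
  endpoints_inj : Function.Injective
    (fun p : Fin n × Bool => if p.2 then over' p.1 else under p.1)
  sign_pm : ∀ c, sign c = 1 ∨ sign c = -1

/-- The position of the over-passage of crossing `c` (the field `over` of the original). -/
abbrev GaussDiagram.over {n : ℕ} (G : GaussDiagram n) : Fin n → ZMod (2 * n) := G.over'

namespace GaussDiagram

/-- `x` lies strictly inside the arc running forward (in the orientation of the circle)
from `a` to `b`. -/
def Between {m : ℕ} (a b x : ZMod m) : Prop :=
  (x - a).val < (b - a).val ∧ x ≠ a

variable {n : ℕ}

/-- After orientedly smoothing the crossing `c`, the first component of the resulting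
2-component link `L_c` (the component carrying the dot placed on the incoming understrand
of `c`) is the arc running forward from the over-passage of `c` to its under-passage. -/
def onComp1 (G : GaussDiagram n) (c : Fin n) (x : ZMod (2 * n)) : Prop :=
  Between (G.over c) (G.under c) x

/-- The chords `c` and `d` intersect (interleave): exactly one endpoint of `d` lies in the
arc cut out by `c`; equivalently `d` becomes a linking crossing of the smoothed link `L_c`. -/
def Crosses (G : GaussDiagram n) (c d : Fin n) : Prop :=
  Xor' (G.onComp1 c (G.over d)) (G.onComp1 c (G.under d))

/-- `d ∈ P_c`: `d` intersects `c` positively (traveling along the first component of `L_c`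
one passes *over* `d`). -/
def PosAt (G : GaussDiagram n) (c d : Fin n) : Prop :=
  G.Crosses c d ∧ G.onComp1 c (G.over d)

/-- `d ∈ N_c`: `d` intersects `c` negatively (traveling along the first component of `L_c`
one passes *under* `d`). -/
def NegAt (G : GaussDiagram n) (c d : Fin n) : Prop :=
  G.Crosses c d ∧ G.onComp1 c (G.under d)

/-- The wriggle number `W(L_c) = lk_O(L_c) - lk_U(L_c)` of the ordered 2-component link
obtained by the oriented smoothing at `c`. -/
def wriggle (G : GaussDiagram n) (c : Fin n) : ℤ :=
  (∑ d ∈ Finset.univ.filter (fun d => G.PosAt c d), G.sign d)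
    - ∑ d ∈ Finset.univ.filter (fun d => G.NegAt c d), G.sign d

/-- The writhe: the sum of the signs of all crossings. -/
def writhe (G : GaussDiagram n) : ℤ := ∑ c, G.sign c

/-- The Wriggle Polynomial `W_K(t) = Σ_c sign(c) · t^{W(L_c)} - writhe(K)`, as a Laurent
polynomial over `ℤ`. -/
def wrigglePoly (G : GaussDiagram n) : LaurentPolynomial ℤ :=
  (∑ c, C (G.sign c) * T (G.wriggle c)) - C G.writhe

end GaussDiagram

namespace GaussDiagram

variable {n : ℕ}

/-- `G'` is obtained from `G` by a crossing change at the crossing `c₁`: the over/under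
data at `c₁` is exchanged (the chord is reversed) and its sign is switched, while all
other crossings are unchanged. -/
def IsCrossingChange (G G' : GaussDiagram n) (c₁ : Fin n) : Prop :=
  G'.over = Function.update G.over c₁ (G.under c₁) ∧
  G'.under = Function.update G.under c₁ (G.over c₁) ∧
  G'.sign = Function.update G.sign c₁ (-(G.sign c₁))

/-- A crossing is odd iff the two occurrences of the crossing in the Gauss code are
separated by an odd number of letters, i.e. the forward distance between the two endpoints
of its chord is even. -/
def OddCrossing (G : GaussDiagram n) (c : Fin n) : Prop :=
  Even ((G.under c - G.over c).val)

end GaussDiagram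

open GaussDiagram

lemma aux_between_not_between {m : ℕ} [NeZero m] (a b x : ZMod m)
    (hab : a ≠ b) (hxa : x ≠ a) (hxb : x ≠ b) :
    GaussDiagram.Between a b x ↔ ¬ GaussDiagram.Between b a x := by
  unfold GaussDiagram.Between
  simp only [hxa, hxb, ne_eq, not_false_eq_true, and_true, not_and]
  have hmm : 0 < m := Nat.pos_of_ne_zero (NeZero.ne m)
  set u := x - a with hu
  set v := b - a with hv
  have hxbv : x - b = u + (-v) := by rw [hu, hv]; ring
  have habv : a - b = -v := by rw [hv]; ring
  have hu0 : u ≠ 0 := sub_ne_zero.mpr hxa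
  have hv0 : v ≠ 0 := sub_ne_zero.mpr (fun h => hab h.symm)
  have huv : u ≠ v := fun h => hxb (by
    have := congrArg (· + a) h
    simpa [hu, hv, sub_add_cancel] using this)
  have hU : u.val < m := ZMod.val_lt u
  have hV : v.val < m := ZMod.val_lt v
  have hU0 : u.val ≠ 0 := fun h => hu0 ((ZMod.val_eq_zero u).mp h)
  have hV0 : v.val ≠ 0 := fun h => hv0 ((ZMod.val_eq_zero v).mp h)
  have hUV : u.val ≠ v.val := fun h => huv (ZMod.val_injective m h)
  have hnegv : (-v).val = m - v.val := by rw [ZMod.neg_val, if_neg hv0]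
  rw [hxbv, habv, ZMod.val_add, hnegv]
  have hmod : (u.val + (m - v.val)) % m =
      if u.val < v.val then u.val + (m - v.val) else u.val - v.val := by
    rcases lt_or_ge u.val v.val with h | h
    · rw [if_pos h, Nat.mod_eq_of_lt (by omega)]
    · rw [if_neg (not_lt.mpr h), Nat.mod_eq_sub_mod (by omega)]
      have : u.val + (m - v.val) - m = u.val - v.val := by omega
      rw [this, Nat.mod_eq_of_lt (by omega)]
  rw [hmod]
  rcases lt_or_ge u.val v.val with h | h
  · rw [if_pos h]; omega
  · rw [if_neg (not_lt.mpr h)]; omega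

lemma aux_not_crosses_self {n : ℕ} (G : GaussDiagram n) (c : Fin n) :
    ¬ G.Crosses c c := by
  unfold GaussDiagram.Crosses GaussDiagram.onComp1 GaussDiagram.Between
  rintro (⟨⟨_, h⟩, -⟩ | ⟨⟨h, -⟩, -⟩)
  · exact h rfl
  · exact absurd h (lt_irrefl _)

/-- If `K₊` and `K₋` differ by a crossing change at a single crossing `c₁`,
then `W(L_{c₁})` computed in `K₊` equals `-W(L_{ĉ₁})` computed in `K₋` (after smoothing,
one gets the same link with the order of its two components exchanged, and the wriggle
number changes sign under exchange of the component order). -/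
theorem wriggle_crossingChange_self {n : ℕ} (G G' : GaussDiagram n) (c₁ : Fin n)
    (h : GaussDiagram.IsCrossingChange G G' c₁) :
    G.wriggle c₁ = - G'.wriggle c₁ := by
  obtain ⟨ho, hu, hs⟩ := h
  have hn : 0 < n := c₁.pos
  haveI : NeZero (2 * n) := ⟨by omega⟩
  -- endpoint values
  have ho1 : G'.over c₁ = G.under c₁ := by rw [ho]; simp
  have hu1 : G'.under c₁ = G.over c₁ := by rw [hu]; simp
  have hinj := G.endpoints_inj
  have hou : G.over c₁ ≠ G.under c₁ := by
    intro hE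
    have := hinj (a₁ := (c₁, true)) (a₂ := (c₁, false)) (by simpa using hE)
    simp at this
  -- distinctness of endpoints of d ≠ c₁ from those of c₁
  have hdist : ∀ d : Fin n, d ≠ c₁ →
      G.over d ≠ G.over c₁ ∧ G.over d ≠ G.under c₁ ∧
      G.under d ≠ G.over c₁ ∧ G.under d ≠ G.under c₁ := by
    intro d hd
    refine ⟨?_, ?_, ?_, ?_⟩ <;> intro hE
    · exact hd (congrArg Prod.fst (hinj (a₁ := (d, true)) (a₂ := (c₁, true)) (by simpa using hE)))
    · have := hinj (a₁ := (d, true)) (a₂ := (c₁, false)) (by simpa using hE)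
      simpa using congrArg Prod.snd this
    · have := hinj (a₁ := (d, false)) (a₂ := (c₁, true)) (by simpa using hE)
      simpa using congrArg Prod.snd this
    · exact hd (congrArg Prod.fst (hinj (a₁ := (d, false)) (a₂ := (c₁, false)) (by simpa using hE)))
  -- over/under of d ≠ c₁ agree in G and G'
  have hoD : ∀ d : Fin n, d ≠ c₁ → G'.over d = G.over d := by
    intro d hd; rw [ho]; simp [Function.update_of_ne hd]
  have huD : ∀ d : Fin n, d ≠ c₁ → G'.under d = G.under d := by
    intro d hd; rw [hu]; simp [Function.update_of_ne hd]
  have hsD : ∀ d : Fin n, d ≠ c₁ → G'.sign d = G.sign d := by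
    intro d hd; rw [hs]; simp [Function.update_of_ne hd]
  -- the component-membership flips
  have hflip : ∀ x : ZMod (2 * n), x ≠ G.over c₁ → x ≠ G.under c₁ →
      (G'.onComp1 c₁ x ↔ ¬ G.onComp1 c₁ x) := by
    intro x hx1 hx2
    unfold GaussDiagram.onComp1
    rw [ho1, hu1]
    exact aux_between_not_between _ _ _ (fun hE => hou hE.symm) hx2 hx1
  -- PosAt/NegAt swap for d ≠ c₁
  have hswap : ∀ d : Fin n, d ≠ c₁ →
      (G'.PosAt c₁ d ↔ G.NegAt c₁ d) ∧ (G'.NegAt c₁ d ↔ G.PosAt c₁ d) := by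
    intro d hd
    obtain ⟨h1, h2, h3, h4⟩ := hdist d hd
    have hfo : G'.onComp1 c₁ (G'.over d) ↔ ¬ G.onComp1 c₁ (G.over d) := by
      rw [hoD d hd]; exact hflip _ h1 h2
    have hfu : G'.onComp1 c₁ (G'.under d) ↔ ¬ G.onComp1 c₁ (G.under d) := by
      rw [huD d hd]; exact hflip _ h3 h4
    have hcr : G'.Crosses c₁ d ↔ G.Crosses c₁ d := by
      unfold GaussDiagram.Crosses
      rw [(show ∀ a b : Prop, Xor' a b ↔ (a ∧ ¬b) ∨ (b ∧ ¬a) from fun _ _ => Iff.rfl), (show ∀ a b : Prop, Xor' a b ↔ (a ∧ ¬b) ∨ (b ∧ ¬a) from fun _ _ => Iff.rfl), hfo, hfu]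
      tauto
    constructor
    · unfold GaussDiagram.PosAt GaussDiagram.NegAt
      rw [hcr, hfo]
      unfold GaussDiagram.Crosses; rw [(show ∀ a b : Prop, Xor' a b ↔ (a ∧ ¬b) ∨ (b ∧ ¬a) from fun _ _ => Iff.rfl)]
      tauto
    · unfold GaussDiagram.PosAt GaussDiagram.NegAt
      rw [hcr, hfu]
      unfold GaussDiagram.Crosses; rw [(show ∀ a b : Prop, Xor' a b ↔ (a ∧ ¬b) ∨ (b ∧ ¬a) from fun _ _ => Iff.rfl)]
      tauto
  -- c₁ never crosses itself
  have hc1G : ¬ G.Crosses c₁ c₁ := aux_not_crosses_self G c₁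
  have hc1G' : ¬ G'.Crosses c₁ c₁ := aux_not_crosses_self G' c₁
  -- set equalities
  have hset1 : Finset.univ.filter (fun d => G'.PosAt c₁ d)
      = Finset.univ.filter (fun d => G.NegAt c₁ d) := by
    ext d
    by_cases hd : d = c₁
    · subst hd
      simp only [Finset.mem_filter, Finset.mem_univ, true_and]
      constructor
      · intro hP; exact absurd hP.1 hc1G'
      · intro hN; exact absurd hN.1 hc1G
    · simp only [Finset.mem_filter, Finset.mem_univ, true_and]
      exact (hswap d hd).1
  have hset2 : Finset.univ.filter (fun d => G'.NegAt c₁ d)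
      = Finset.univ.filter (fun d => G.PosAt c₁ d) := by
    ext d
    by_cases hd : d = c₁
    · subst hd
      simp only [Finset.mem_filter, Finset.mem_univ, true_and]
      constructor
      · intro hP; exact absurd hP.1 hc1G'
      · intro hN; exact absurd hN.1 hc1G
    · simp only [Finset.mem_filter, Finset.mem_univ, true_and]
      exact (hswap d hd).2
  -- sums agree with G-signs
  have hsum1 : ∑ d ∈ Finset.univ.filter (fun d => G'.PosAt c₁ d), G'.sign d
      = ∑ d ∈ Finset.univ.filter (fun d => G.NegAt c₁ d), G.sign d := by
    rw [hset1]
    refine Finset.sum_congr rfl ?_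
    intro d hd
    simp only [Finset.mem_filter, Finset.mem_univ, true_and] at hd
    have hdne : d ≠ c₁ := by
      intro hE; subst hE; exact hc1G hd.1
    exact hsD d hdne
  have hsum2 : ∑ d ∈ Finset.univ.filter (fun d => G'.NegAt c₁ d), G'.sign d
      = ∑ d ∈ Finset.univ.filter (fun d => G.PosAt c₁ d), G.sign d := by
    rw [hset2]
    refine Finset.sum_congr rfl ?_
    intro d hd
    simp only [Finset.mem_filter, Finset.mem_univ, true_and] at hd
    have hdne : d ≠ c₁ := by
      intro hE; subst hE; exact hc1G hd.1
    exact hsD d hdne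
  unfold GaussDiagram.wriggle
  rw [hsum1, hsum2]
  ring
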